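/- Let $Y \subset \mathbb{R}^n$, $X \subset \mathbb{R}^m$ be nonempty compact convex, $f \in C^1(Y \times X)$ convex, $g \in C^1(Y \times X)$ with convex components on $Y \times X^{\varepsilon}$ for some $\varepsilon > 0$, and assume there exist $\kappa, r > 0$ such that for all $x \in X$ there is $y \in Y$ with $\mathbb{B}_n(y,r) \cap \mathrm{Aff}(Y) \ne \emptyset$, $Ay + Bx = b$, and $g(y,x) < -\kappa\mathbf{e}$. Let $(\mathcal{Q}^k)$ be convex $L$-Lipschitz functions on $Y$ sandwiched between two continuous functions, $(x^k) \subset X$, $\varepsilon^k \to 0$, $y^k$ an $\varepsilon^k$-optimal feasible solution of $\inf\{f(y,x^k) + \mathcal{Q}^k(y) : y \in Y, Ay + Bx^k = b, g(y, x^k) \le 0\}$, and $(\lambda^k, \mu^k)$ an $\varepsilon^k$-optimal dual solution. Then $\eta^k := \max_{y \in Y}\big[\langle \nabla_y f(y^k, x^k) + A^T\lambda^k + \sum_i \mu^k(i)\nabla_y g_i(y^k, x^k), y^k - y\rangle + \mathcal{Q}^k(y^k) - \mathcal{Q}^k(y)\big] \to 0$ as $k \to \infty$. -/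

import Mathlib

open Set Filter Metric
open scoped RealInnerProductSpace Topology

private lemma grad_ineq' {E : Type*} [NormedAddCommGroup E] [NormedSpace ℝ E]
    {s : Set E} {f : E → ℝ} (hf : ConvexOn ℝ s f) {x z : E} (hx : x ∈ s) (hz : z ∈ s)
    {f' : E →L[ℝ] ℝ} (hd : HasFDerivAt f f' x) : f' (z - x) ≤ f z - f x := by
  have h1 : HasDerivAt (fun t : ℝ => x + t • (z - x)) (z - x) 0 := by
    simpa using ((hasDerivAt_id (0:ℝ)).smul_const (z - x)).const_add x
  have h2 : HasDerivAt (fun t : ℝ => f (x + t • (z - x))) (f' (z - x)) 0 :=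
    (show HasFDerivAt f f' (x + (0:ℝ) • (z - x)) by simpa using hd).comp_hasDerivAt 0 h1
  rw [hasDerivAt_iff_tendsto_slope] at h2
  have h3 : Tendsto (slope (fun t : ℝ => f (x + t • (z - x))) 0) (𝓝[>] 0)
      (𝓝 (f' (z - x))) :=
    h2.mono_left (nhdsWithin_mono 0 (fun t ht => ne_of_gt ht))
  refine le_of_tendsto h3 ?_
  filter_upwards [Ioc_mem_nhdsGT_of_mem (Set.left_mem_Ico.mpr zero_lt_one)] with t ht
  have hcv := hf.2 hx hz (by linarith [ht.2] : (0:ℝ) ≤ 1 - t) ht.1.le (by ring)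
  have hpt : (1 - t) • x + t • z = x + t • (z - x) := by
    rw [sub_smul, one_smul, smul_sub]; abel
  rw [hpt, smul_eq_mul, smul_eq_mul] at hcv
  have hc0 : f (x + (0:ℝ) • (z - x)) = f x := by simp
  calc slope (fun t : ℝ => f (x + t • (z - x))) 0 t
      = (f (x + t • (z - x)) - f x) / t := by rw [slope_def_field, hc0, sub_zero]
    _ ≤ f z - f x := by rw [div_le_iff₀ ht.1]; nlinarith

set_option maxHeartbeats 1000000 in
/-- Vanishing-error lemma for variable feasible sets, dual version
(Proposition `propvanish1dual`). -/
theorem stmt_12 {n m q p : ℕ}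
    (X : Set (EuclideanSpace ℝ (Fin m))) (Y : Set (EuclideanSpace ℝ (Fin n)))
    (hXne : X.Nonempty) (hXcv : Convex ℝ X) (hXcp : IsCompact X)
    (hYne : Y.Nonempty) (hYcv : Convex ℝ Y) (hYcp : IsCompact Y)
    (f : EuclideanSpace ℝ (Fin n) × EuclideanSpace ℝ (Fin m) → ℝ)
    (Gfy : EuclideanSpace ℝ (Fin n) × EuclideanSpace ℝ (Fin m) → EuclideanSpace ℝ (Fin n))
    (Gfx : EuclideanSpace ℝ (Fin n) × EuclideanSpace ℝ (Fin m) → EuclideanSpace ℝ (Fin m))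
    (Df : EuclideanSpace ℝ (Fin n) × EuclideanSpace ℝ (Fin m) →
          EuclideanSpace ℝ (Fin n) × EuclideanSpace ℝ (Fin m) →L[ℝ] ℝ)
    (hfconv : ConvexOn ℝ (Y ×ˢ X) f)
    (hfdiff : ∀ z ∈ Y ×ˢ X, HasFDerivAt f (Df z) z)
    (hfgrad : ∀ z ∈ Y ×ˢ X, ∀ v, Df z v = ⟪Gfy z, v.1⟫ + ⟪Gfx z, v.2⟫)
    (hfC1 : ContinuousOn Gfy (Y ×ˢ X))
    (g : Fin p → EuclideanSpace ℝ (Fin n) × EuclideanSpace ℝ (Fin m) → ℝ)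
    (Ggy : Fin p → EuclideanSpace ℝ (Fin n) × EuclideanSpace ℝ (Fin m) →
      EuclideanSpace ℝ (Fin n))
    (Ggx : Fin p → EuclideanSpace ℝ (Fin n) × EuclideanSpace ℝ (Fin m) →
      EuclideanSpace ℝ (Fin m))
    (Dg : Fin p → EuclideanSpace ℝ (Fin n) × EuclideanSpace ℝ (Fin m) →
          EuclideanSpace ℝ (Fin n) × EuclideanSpace ℝ (Fin m) →L[ℝ] ℝ)
    (ε : ℝ) (hεpos : 0 < ε)
    (hgconv : ∀ i, ConvexOn ℝ (Y ×ˢ {x | ∃ u ∈ X, ‖x - u‖ ≤ ε}) (g i))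
    (hgdiff : ∀ i, ∀ z ∈ Y ×ˢ X, HasFDerivAt (g i) (Dg i z) z)
    (hggrad : ∀ i, ∀ z ∈ Y ×ˢ X, ∀ v, Dg i z v = ⟪Ggy i z, v.1⟫ + ⟪Ggx i z, v.2⟫)
    (hgC1 : ∀ i, ContinuousOn (Ggy i) (Y ×ˢ X))
    (A : EuclideanSpace ℝ (Fin n) →L[ℝ] EuclideanSpace ℝ (Fin q))
    (B : EuclideanSpace ℝ (Fin m) →L[ℝ] EuclideanSpace ℝ (Fin q))
    (b : EuclideanSpace ℝ (Fin q))
    -- the uniform Slater assumption (H)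
    (κ r : ℝ) (hκ : 0 < κ) (hr : 0 < r)
    (hslater : ∀ x ∈ X, ∃ y ∈ Y,
      (closedBall y r ∩ (affineSpan ℝ Y : Set (EuclideanSpace ℝ (Fin n)))).Nonempty ∧
      A y + B x = b ∧ ∀ i, g i (y, x) < -κ)
    -- the sequence of convex `L`-Lipschitz sandwiched functions
    (L : NNReal) (Qk : ℕ → EuclideanSpace ℝ (Fin n) → ℝ)
    (hQkconv : ∀ k, ConvexOn ℝ Y (Qk k))
    (hQkLip : ∀ k, LipschitzOnWith L (Qk k) Y)
    (Qlo Qhi : EuclideanSpace ℝ (Fin n) → ℝ)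
    (hQlo : ContinuousOn Qlo Y) (hQhi : ContinuousOn Qhi Y)
    (hsand : ∀ k, ∀ y ∈ Y, Qlo y ≤ Qk k y ∧ Qk k y ≤ Qhi y)
    -- the iterates
    (x : ℕ → EuclideanSpace ℝ (Fin m)) (hx : ∀ k, x k ∈ X)
    (εk : ℕ → ℝ) (hεk : ∀ k, 0 ≤ εk k) (hεk0 : Tendsto εk atTop (𝓝 0))
    -- `ε^k`-optimal feasible primal solutions
    (y : ℕ → EuclideanSpace ℝ (Fin n)) (hy : ∀ k, y k ∈ Y)
    (hyfeas : ∀ k, A (y k) + B (x k) = b ∧ ∀ i, g i (y k, x k) ≤ 0)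
    (hyopt : ∀ k, ∀ z ∈ Y, (A z + B (x k) = b ∧ ∀ i, g i (z, x k) ≤ 0) →
      f (y k, x k) + Qk k (y k) ≤ f (z, x k) + Qk k z + εk k)
    -- primal optimal values and `ε^k`-optimal feasible dual solutions
    (v : ℕ → ℝ)
    (hv : ∀ k, IsGLB ((fun z => f (z, x k) + Qk k z) ''
      {z ∈ Y | A z + B (x k) = b ∧ ∀ i, g i (z, x k) ≤ 0}) (v k))
    (h : ℕ → EuclideanSpace ℝ (Fin q) → (Fin p → ℝ) → ℝ)
    (hh : ∀ k lam mu, h k lam mu = sInf ((fun z => f (z, x k) + Qk k z +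
      ⟪lam, A z + B (x k) - b⟫ + ∑ i, mu i * g i (z, x k)) '' Y))
    (lam : ℕ → EuclideanSpace ℝ (Fin q)) (mu : ℕ → Fin p → ℝ)
    (hlamfeas : ∀ k, ∃ z ∈ (affineSpan ℝ Y : Set (EuclideanSpace ℝ (Fin n))),
      lam k = A z + B (x k) - b)
    (hmu : ∀ k i, 0 ≤ mu k i)
    (hdualopt : ∀ k, h k (lam k) (mu k) ≥ v k - εk k)
    -- the optimality-gap quantities
    (η : ℕ → ℝ)
    (hη : ∀ k, IsGreatest ((fun z =>
      ⟪Gfy (y k, x k) + (ContinuousLinearMap.adjoint A) (lam k)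
        + ∑ i, mu k i • Ggy i (y k, x k), y k - z⟫
      + Qk k (y k) - Qk k z) '' Y) (η k)) :
    Tendsto η atTop (𝓝 0) := by
  classical
  -- memberships in the ε-enlargement of X
  have hXe : ∀ k', x k' ∈ {x' | ∃ u ∈ X, ‖x' - u‖ ≤ ε} := fun k' => ⟨x k', hx k', by simp [hεpos.le]⟩
  -- continuity facts
  have hfcont : ContinuousOn f (Y ×ˢ X) := fun z hz => (hfdiff z hz).continuousAt.continuousWithinAt
  have hgcont : ∀ i, ContinuousOn (g i) (Y ×ˢ X) := fun i z hz =>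
    (hgdiff i z hz).continuousAt.continuousWithinAt
  have hYXcp : IsCompact (Y ×ˢ X) := hYcp.prod hXcp
  obtain ⟨Cf, hCf⟩ := hYXcp.exists_bound_of_continuousOn hfcont
  obtain ⟨Ch, hCh⟩ := hYcp.exists_bound_of_continuousOn hQhi
  obtain ⟨Cl, hCl⟩ := hYcp.exists_bound_of_continuousOn hQlo
  obtain ⟨y₀, hy₀⟩ := hYne
  have hCf0 : 0 ≤ Cf := le_trans (norm_nonneg _) (hCf (y₀, x 0) (Set.mk_mem_prod hy₀ (hx 0)))
  have hCh0 : 0 ≤ Ch := le_trans (norm_nonneg _) (hCh y₀ hy₀)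
  have hCl0 : 0 ≤ Cl := le_trans (norm_nonneg _) (hCl y₀ hy₀)
  obtain ⟨D, hD'⟩ := Metric.isBounded_iff.mp hYcp.isBounded
  have hD : ∀ a ∈ Y, ∀ b' ∈ Y, ‖a - b'‖ ≤ D := fun a ha b' hb' => by
    rw [← dist_eq_norm]; exact hD' ha hb'
  have hD0 : 0 ≤ D := by simpa using hD y₀ hy₀ y₀ hy₀
  -- continuity of the Lagrangian
  have hLagcont : ∀ k, ContinuousOn (fun z => f (z, x k) + Qk k z +
      ⟪lam k, A z + B (x k) - b⟫ + ∑ i, mu k i * g i (z, x k)) Y := by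
    intro k
    have hc1 : ContinuousOn (fun z => f (z, x k)) Y :=
      hfcont.comp (continuous_id.prodMk continuous_const).continuousOn
        (fun z hz => Set.mk_mem_prod hz (hx k))
    have hc2 : ContinuousOn (Qk k) Y := (hQkLip k).continuousOn
    have hc3 : ContinuousOn (fun z => ⟪lam k, A z + B (x k) - b⟫) Y :=
      (continuous_const.inner ((A.continuous.add continuous_const).sub continuous_const)).continuousOn
    have hc4 : ContinuousOn (fun z => ∑ i, mu k i * g i (z, x k)) Y := by
      apply continuousOn_finset_sum
      intro i _
      exact continuousOn_const.mul ((hgcont i).comp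
        (continuous_id.prodMk continuous_const).continuousOn
        (fun z hz => Set.mk_mem_prod hz (hx k)))
    exact ((hc1.add hc2).add hc3).add hc4
  -- the dual value is at most any Lagrangian value and near the primal value
  have hLagle : ∀ k, ∀ z ∈ Y, v k - εk k ≤ f (z, x k) + Qk k z +
      ⟪lam k, A z + B (x k) - b⟫ + ∑ i, mu k i * g i (z, x k) := by
    intro k z hz
    have hbdd := hYcp.bddBelow_image (hLagcont k)
    have h1 := csInf_le hbdd (Set.mem_image_of_mem _ hz)
    rw [← hh k (lam k) (mu k)] at h1
    linarith [hdualopt k]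
  -- primal near-optimality
  have hprim : ∀ k, f (y k, x k) + Qk k (y k) ≤ v k + εk k := by
    intro k
    have hlb : f (y k, x k) + Qk k (y k) - εk k ∈ lowerBounds ((fun z => f (z, x k) + Qk k z) ''
        {z ∈ Y | A z + B (x k) = b ∧ ∀ i, g i (z, x k) ≤ 0}) := by
      rintro w ⟨z, ⟨hzY, hzf⟩, rfl⟩
      have := hyopt k z hzY hzf
      simp only
      linarith
    linarith [(hv k).2 hlb]
  -- lower bound on the optimal values
  have hvlb : ∀ k, -(Cf + Cl) ≤ v k := by
    intro k
    refine (hv k).2 ?_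
    rintro w ⟨z, ⟨hzY, -⟩, rfl⟩
    have h1 := abs_le.mp (by simpa [Real.norm_eq_abs] using hCf (z, x k) (Set.mk_mem_prod hzY (hx k)))
    have h2 := abs_le.mp (by simpa [Real.norm_eq_abs] using hCl z hzY)
    have h3 := (hsand k z hzY).1
    simp only
    linarith [h1.1, h2.1]
  -- bound on the sum of the multipliers
  set M : ℝ := (2 * Cf + Ch + Cl + 1) / κ with hM
  have hM0 : 0 ≤ M := div_nonneg (by linarith) hκ.le
  have hμsum : ∀ k, εk k ≤ 1 → ∑ i, mu k i ≤ M := by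
    intro k hk1
    obtain ⟨yh, hyhY, -, hyheq, hyhg⟩ := hslater (x k) (hx k)
    have e0 : A yh + B (x k) - b = 0 := sub_eq_zero.mpr hyheq
    have hf1 : f (yh, x k) ≤ Cf := by
      have := hCf (yh, x k) (Set.mk_mem_prod hyhY (hx k))
      rw [Real.norm_eq_abs] at this
      linarith [(abs_le.mp this).2]
    have hQ1 : Qk k yh ≤ Ch :=
      le_trans (hsand k yh hyhY).2 (le_trans (le_abs_self _)
        (by simpa [Real.norm_eq_abs] using hCh yh hyhY))
    have hg1 : ∑ i, mu k i * g i (yh, x k) ≤ -(κ * ∑ i, mu k i) := by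
      calc ∑ i, mu k i * g i (yh, x k) ≤ ∑ i, mu k i * (-κ) :=
            Finset.sum_le_sum (fun i _ => mul_le_mul_of_nonneg_left (hyhg i).le (hmu k i))
        _ = -(κ * ∑ i, mu k i) := by rw [← Finset.sum_mul]; ring
    have e2 := hLagle k yh hyhY
    rw [e0, inner_zero_right] at e2
    have e3 := hvlb k
    rw [hM, le_div_iff₀ hκ]
    nlinarith
  -- nonnegativity of η
  have hη0 : ∀ k, 0 ≤ η k := fun k => (hη k).2 ⟨y k, hy k, by simp⟩
  -- joint uniform continuity of the gradients
  have hunif : ∀ δ' > (0:ℝ), ∃ t₀ > (0:ℝ), ∀ a ∈ Y ×ˢ X, ∀ b' ∈ Y ×ˢ X, dist a b' < t₀ →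
      dist (Gfy a) (Gfy b') < δ' ∧ ∀ i, dist (Ggy i a) (Ggy i b') < δ' := by
    intro δ' hδ'
    obtain ⟨tf, htf, hf'⟩ := Metric.uniformContinuousOn_iff.mp
      (hYXcp.uniformContinuousOn_of_continuous hfC1) δ' hδ'
    have hug : ∀ i, ∃ tg > (0:ℝ), ∀ a ∈ Y ×ˢ X, ∀ b' ∈ Y ×ˢ X, dist a b' < tg →
        dist (Ggy i a) (Ggy i b') < δ' := fun i =>
      Metric.uniformContinuousOn_iff.mp (hYXcp.uniformContinuousOn_of_continuous (hgC1 i)) δ' hδ'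
    choose tg htg hg' using hug
    have hex : ∃ c > (0:ℝ), ∀ i, c ≤ tg i := by
      rcases isEmpty_or_nonempty (Fin p) with hp | hp
      · exact ⟨1, one_pos, fun i => (IsEmpty.false i).elim⟩
      · obtain ⟨i₀, -, hi₀⟩ := Finset.exists_min_image Finset.univ tg ⟨Classical.arbitrary _, Finset.mem_univ _⟩
        exact ⟨tg i₀, htg i₀, fun i => hi₀ i (Finset.mem_univ i)⟩
    obtain ⟨c, hc, hci⟩ := hex
    exact ⟨min tf c, lt_min htf hc, fun a ha b' hb' hab =>
      ⟨hf' a ha b' hb' (hab.trans_le (min_le_left _ _)),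
       fun i => hg' i a ha b' hb' (hab.trans_le ((min_le_right _ _).trans (hci i)))⟩⟩
  -- main argument
  rw [Metric.tendsto_atTop]
  intro δ hδ
  set δ' : ℝ := δ / (2 * (D + 1) * (M + 1)) with hδ'def
  have hδ'pos : 0 < δ' := div_pos hδ (by nlinarith)
  obtain ⟨t₀, ht₀, hu⟩ := hunif δ' hδ'pos
  set t : ℝ := min 1 (t₀ / (2 * (D + 1))) with htdef
  have ht : 0 < t := lt_min one_pos (div_pos ht₀ (by linarith))
  have ht1 : t ≤ 1 := min_le_left _ _
  have htD : t * D < t₀ := by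
    have h1 : t ≤ t₀ / (2 * (D + 1)) := min_le_right _ _
    have h2 : t * D ≤ (t₀ / (2 * (D + 1))) * D := mul_le_mul_of_nonneg_right h1 hD0
    have h3 : (t₀ / (2 * (D + 1))) * D < t₀ := by
      rw [div_mul_eq_mul_div, div_lt_iff₀ (by linarith : (0:ℝ) < 2 * (D + 1))]
      nlinarith
    linarith
  obtain ⟨N, hN⟩ := Metric.tendsto_atTop.mp hεk0 (min 1 (t * δ / 4))
    (lt_min one_pos (by positivity))
  refine ⟨N, fun k hk => ?_⟩
  have hdk := hN k hk
  rw [Real.dist_eq, sub_zero, abs_of_nonneg (hεk k)] at hdk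
  have hεk1 : εk k ≤ 1 := (lt_min_iff.mp hdk).1.le
  have hεksmall : εk k < t * δ / 4 := (lt_min_iff.mp hdk).2
  -- the per-k estimate
  obtain ⟨z₀, hz₀Y, hz₀⟩ := (hη k).1
  set w : EuclideanSpace ℝ (Fin n) := z₀ - y k with hw
  have hwD : ‖w‖ ≤ D := hD z₀ hz₀Y (y k) (hy k)
  set zt : EuclideanSpace ℝ (Fin n) := y k + t • w with hzt
  have hztY : zt ∈ Y := by
    have hrw : zt = (1 - t) • y k + t • z₀ := by
      rw [hzt, hw, sub_smul, one_smul, smul_sub]; abel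
    rw [hrw]
    exact hYcv (hy k) hz₀Y (by linarith) ht.le (by ring)
  have hztX : (zt, x k) ∈ Y ×ˢ X := Set.mk_mem_prod hztY (hx k)
  have hykX : (y k, x k) ∈ Y ×ˢ X := Set.mk_mem_prod (hy k) (hx k)
  have h4 : y k - zt = -(t • w) := by rw [hzt]; abel
  have hdist1 : dist (y k) zt = t * ‖w‖ := by
    rw [dist_eq_norm, h4, norm_neg, norm_smul, Real.norm_eq_abs, abs_of_pos ht]
  have hdistzt : dist ((y k, x k) : EuclideanSpace ℝ (Fin n) × EuclideanSpace ℝ (Fin m))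
      (zt, x k) < t₀ := by
    rw [Prod.dist_eq]
    simp only [dist_self]
    rw [max_eq_left (by rw [hdist1]; positivity), hdist1]
    have := mul_le_mul_of_nonneg_left hwD ht.le
    linarith
  obtain ⟨hGf, hGg⟩ := hu (y k, x k) hykX (zt, x k) hztX hdistzt
  -- gradient inequality for f
  have e1 : f (zt, x k) ≤ f (y k, x k) + t * ⟪Gfy (zt, x k), w⟫ := by
    have h1 := grad_ineq' hfconv hztX hykX (hfdiff _ hztX)
    rw [hfgrad _ hztX] at h1
    have hsub : ((y k, x k) - (zt, x k) :
        EuclideanSpace ℝ (Fin n) × EuclideanSpace ℝ (Fin m)) =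
        (y k - zt, (0 : EuclideanSpace ℝ (Fin m))) := by
      simp [Prod.ext_iff]
    rw [hsub] at h1
    simp only [inner_zero_right, add_zero] at h1
    rw [h4, inner_neg_right, real_inner_smul_right] at h1
    linarith
  -- gradient inequalities for the g i
  have e4 : ∑ i, mu k i * g i (zt, x k) ≤ ∑ i, mu k i * g i (y k, x k) +
      t * ∑ i, mu k i * ⟪Ggy i (zt, x k), w⟫ := by
    have hterm : ∀ i ∈ Finset.univ, mu k i * g i (zt, x k) ≤
        mu k i * (g i (y k, x k) + t * ⟪Ggy i (zt, x k), w⟫) := by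
      intro i _
      refine mul_le_mul_of_nonneg_left ?_ (hmu k i)
      have h1 := grad_ineq' (hgconv i) (Set.mk_mem_prod hztY (hXe k))
        (Set.mk_mem_prod (hy k) (hXe k)) (hgdiff i _ hztX)
      rw [hggrad i _ hztX] at h1
      have hsub : ((y k, x k) - (zt, x k) :
          EuclideanSpace ℝ (Fin n) × EuclideanSpace ℝ (Fin m)) =
          (y k - zt, (0 : EuclideanSpace ℝ (Fin m))) := by
        simp [Prod.ext_iff]
      rw [hsub] at h1
      simp only [inner_zero_right, add_zero] at h1
      rw [h4, inner_neg_right, real_inner_smul_right] at h1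
      linarith
    calc ∑ i, mu k i * g i (zt, x k)
        ≤ ∑ i, mu k i * (g i (y k, x k) + t * ⟪Ggy i (zt, x k), w⟫) := Finset.sum_le_sum hterm
      _ = ∑ i, mu k i * g i (y k, x k) + t * ∑ i, mu k i * ⟪Ggy i (zt, x k), w⟫ := by
          rw [Finset.mul_sum, ← Finset.sum_add_distrib]
          exact Finset.sum_congr rfl (fun i _ => by ring)
  -- convexity of Qk
  have e2 : Qk k zt ≤ (1 - t) * Qk k (y k) + t * Qk k z₀ := by
    have h1 := (hQkconv k).2 (hy k) hz₀Y (by linarith : (0:ℝ) ≤ 1 - t) ht.le (by ring)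
    have h2 : (1 - t) • y k + t • z₀ = zt := by
      rw [hzt, hw, sub_smul, one_smul, smul_sub]; abel
    rw [h2, smul_eq_mul, smul_eq_mul] at h1
    exact h1
  -- the linear term
  have e3 : ⟪lam k, A zt + B (x k) - b⟫ = t * ⟪(ContinuousLinearMap.adjoint A) (lam k), w⟫ := by
    have h1 : A zt + B (x k) - b = t • A w := by
      rw [hzt, map_add, map_smul, add_right_comm, (hyfeas k).1]
      abel
    rw [h1, real_inner_smul_right, ← ContinuousLinearMap.adjoint_inner_left]
  -- complementary term nonpositive
  have e7 : ∑ i, mu k i * g i (y k, x k) ≤ 0 :=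
    Finset.sum_nonpos (fun i _ => mul_nonpos_iff.mpr (Or.inl ⟨hmu k i, (hyfeas k).2 i⟩))
  have e5 := hLagle k zt hztY
  have e6 := hprim k
  -- key estimate
  have key : t * (Qk k (y k) - Qk k z₀) ≤ 2 * εk k +
      t * (⟪Gfy (zt, x k), w⟫ + ⟪(ContinuousLinearMap.adjoint A) (lam k), w⟫ +
        ∑ i, mu k i * ⟪Ggy i (zt, x k), w⟫) := by
    linarith [e1, e2, e3, e4, e5, e6, e7]
  -- express η k
  have hyz : y k - z₀ = -w := by rw [hw]; abel
  have hsum_inner : ⟪∑ i, mu k i • Ggy i (y k, x k), w⟫ =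
      ∑ i, mu k i * ⟪Ggy i (y k, x k), w⟫ := by
    rw [sum_inner]
    exact Finset.sum_congr rfl (fun i _ => real_inner_smul_left _ _ _)
  have hηval : η k = -(⟪Gfy (y k, x k), w⟫ +
      ⟪(ContinuousLinearMap.adjoint A) (lam k), w⟫ +
      ∑ i, mu k i * ⟪Ggy i (y k, x k), w⟫) + (Qk k (y k) - Qk k z₀) := by
    rw [← hz₀]
    show ⟪Gfy (y k, x k) + (ContinuousLinearMap.adjoint A) (lam k)
        + ∑ i, mu k i • Ggy i (y k, x k), y k - z₀⟫ + Qk k (y k) - Qk k z₀ = _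
    rw [hyz, inner_neg_right, inner_add_left, inner_add_left, hsum_inner]
    ring
  -- gradient-difference bounds
  have hbound1 : ⟪Gfy (zt, x k), w⟫ - ⟪Gfy (y k, x k), w⟫ ≤ δ' * D := by
    have h1 : ⟪Gfy (zt, x k) - Gfy (y k, x k), w⟫ ≤
        ‖Gfy (zt, x k) - Gfy (y k, x k)‖ * ‖w‖ := real_inner_le_norm _ _
    have h2 : ‖Gfy (zt, x k) - Gfy (y k, x k)‖ ≤ δ' := by
      rw [← dist_eq_norm, dist_comm]; exact hGf.le
    have h3 := mul_le_mul h2 hwD (norm_nonneg _) hδ'pos.le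
    rw [inner_sub_left] at h1
    linarith
  have hbound2 : ∑ i, mu k i * ⟪Ggy i (zt, x k), w⟫ -
      ∑ i, mu k i * ⟪Ggy i (y k, x k), w⟫ ≤ M * (δ' * D) := by
    rw [← Finset.sum_sub_distrib]
    calc ∑ i, (mu k i * ⟪Ggy i (zt, x k), w⟫ - mu k i * ⟪Ggy i (y k, x k), w⟫)
        ≤ ∑ i, mu k i * (δ' * D) := by
          refine Finset.sum_le_sum (fun i _ => ?_)
          rw [← mul_sub]
          refine mul_le_mul_of_nonneg_left ?_ (hmu k i)
          have h1 : ⟪Ggy i (zt, x k) - Ggy i (y k, x k), w⟫ ≤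
              ‖Ggy i (zt, x k) - Ggy i (y k, x k)‖ * ‖w‖ := real_inner_le_norm _ _
          have h2 : ‖Ggy i (zt, x k) - Ggy i (y k, x k)‖ ≤ δ' := by
            rw [← dist_eq_norm, dist_comm]; exact (hGg i).le
          have h3 := mul_le_mul h2 hwD (norm_nonneg _) hδ'pos.le
          rw [inner_sub_left] at h1
          linarith
      _ = (∑ i, mu k i) * (δ' * D) := (Finset.sum_mul _ _ _).symm
      _ ≤ M * (δ' * D) := mul_le_mul_of_nonneg_right (hμsum k hεk1) (by positivity)
  -- assemble
  have h5 : t * η k = t * (Qk k (y k) - Qk k z₀) - t * ⟪Gfy (y k, x k), w⟫ -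
      t * ⟪(ContinuousLinearMap.adjoint A) (lam k), w⟫ -
      t * ∑ i, mu k i * ⟪Ggy i (y k, x k), w⟫ := by
    rw [hηval]; ring
  have hb1 := mul_le_mul_of_nonneg_left hbound1 ht.le
  have hb2 := mul_le_mul_of_nonneg_left hbound2 ht.le
  have hfinal : t * η k ≤ 2 * εk k + t * (δ' * D + M * (δ' * D)) := by
    linarith [key, h5, hb1, hb2]
  have hhalf : δ' * D + M * (δ' * D) ≤ δ / 2 := by
    have h1 : δ' * ((D + 1) * (M + 1)) = δ / 2 := by
      rw [hδ'def]
      field_simp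
    have h3 : δ' * ((D + 1) * (M + 1)) - (δ' * D + M * (δ' * D)) = δ' * (M + 1) := by ring
    have h4 : 0 ≤ δ' * (M + 1) := by positivity
    linarith
  have hlast : t * η k < t * δ := by
    have h2 : t * (δ' * D + M * (δ' * D)) ≤ t * (δ / 2) :=
      mul_le_mul_of_nonneg_left hhalf ht.le
    linarith [hfinal, hεksmall, h2]
  have hηδ : η k < δ := lt_of_mul_lt_mul_left hlast ht.le
  rw [Real.dist_eq, sub_zero, abs_of_nonneg (hη0 k)]
  exact hηδ
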